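/- Tree model property: Let Ĉ be a concept and T̂ a TBox of ALCF^P(Z_c) such that Ĉ and, for each axiom C ⊑ D ∈ T̂, the concept ¬C ⊔ D, are in negation normal form (negation occurs only immediately in front of concept names, using the connectives ⊔, ∀r.C, ∀P.⟦Θ⟧ via the abbreviations). Let d be the maximum of |P| over all occurrences of subconcepts of the form ∃P.⟦Θ⟧ in these concepts, and let e be the total number of occurrences of subconcepts of the form ∃r.C or ∃P.⟦Θ⟧ in them; assume d ≥ 1 and e ≥ 1, and set n = d·e. If Ĉ is satisfiable with respect to T̂, then there is an n-tree interpretation I that is a model of T̂ with Ĉ^I ≠ ∅. -/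

import Mathlib

namespace ALCFPZ

/-! Syntax of ALCF^P(Z_c).  Concept names, role names and registers are natural
numbers; the functional role names are the even role names. -/

/-- Constraints.  `eqT i x j y` is `S^i x = S^j y`, `ltT i x j y` is
`S^i x < S^j y`, and `eqC i x c` is `S^i x = c`. -/
inductive Constr where
  | eqT : ℕ → ℕ → ℕ → ℕ → Constr
  | ltT : ℕ → ℕ → ℕ → ℕ → Constr
  | eqC : ℕ → ℕ → ℤ → Constr
  | not : Constr → Constr
  | and : Constr → Constr → Constr
  | or : Constr → Constr → Constr
deriving DecidableEq

/-- The depth of a constraint: the maximal `d` such that `S^d x` occurs in it. -/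
def Constr.depth : Constr → ℕ
  | .eqT i _ j _ => max i j
  | .ltT i _ j _ => max i j
  | .eqC i _ _ => i
  | .not θ => θ.depth
  | .and θ₁ θ₂ => max θ₁.depth θ₂.depth
  | .or θ₁ θ₂ => max θ₁.depth θ₂.depth

/-- Concepts.  `atom A` is a concept name, `inter` is `⊓`, `ex r C` is `∃r.C`,
and `exP P θ` is the path constraint `∃P.⟦θ⟧`. -/
inductive Concept where
  | atom : ℕ → Concept
  | neg : Concept → Concept
  | inter : Concept → Concept → Concept
  | ex : ℕ → Concept → Concept
  | exP : List ℕ → Constr → Concept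
deriving DecidableEq

/-- `C ⊔ D` as the abbreviation `¬(¬C ⊓ ¬D)`. -/
def Concept.or' (C D : Concept) : Concept := .neg (.inter (.neg C) (.neg D))

/-- Well-formedness: in every path constraint `∃P.⟦θ⟧` the depth of `θ` is at
most `|P|`. -/
def Concept.wf : Concept → Prop
  | .atom _ => True
  | .neg C => C.wf
  | .inter C D => C.wf ∧ D.wf
  | .ex _ C => C.wf
  | .exP P θ => θ.depth ≤ P.length

/-- An interpretation with domain `Δ`: interpretations of concept names, role
names (with the even, i.e. functional, role names interpreted functionally), and
a register function assigning integers. -/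
structure Interp (Δ : Type) where
  conc : ℕ → Set Δ
  role : ℕ → Δ → Δ → Prop
  reg : Δ → ℕ → ℤ
  func : ∀ r : ℕ, r % 2 = 0 → ∀ v v' v'' : Δ, role r v v' → role r v v'' → v' = v''

variable {Δ : Type}

/-- Satisfaction of a constraint by a tuple `σ 0, σ 1, …` of domain elements. -/
def Constr.sat (I : Interp Δ) (σ : ℕ → Δ) : Constr → Prop
  | .eqT i x j y => I.reg (σ i) x = I.reg (σ j) y
  | .ltT i x j y => I.reg (σ i) x < I.reg (σ j) y
  | .eqC i x c => I.reg (σ i) x = c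
  | .not θ => ¬ θ.sat I σ
  | .and θ₁ θ₂ => θ₁.sat I σ ∧ θ₂.sat I σ
  | .or θ₁ θ₂ => θ₁.sat I σ ∨ θ₂.sat I σ

/-- `(σ 0, …, σ |P|) ∈ P^I` : consecutive elements are related by the
corresponding roles of the role path `P`. -/
def chainOf (I : Interp Δ) (P : List ℕ) (σ : ℕ → Δ) : Prop :=
  ∀ (i : ℕ) (h : i < P.length), I.role (P.get ⟨i, h⟩) (σ i) (σ (i + 1))

/-- The semantics of concepts. -/
def Concept.sem (I : Interp Δ) : Concept → Set Δ
  | .atom A => I.conc A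
  | .neg C => (C.sem I)ᶜ
  | .inter C D => C.sem I ∩ D.sem I
  | .ex r C => {v | ∃ v', I.role r v v' ∧ v' ∈ C.sem I}
  | .exP P θ => {u | ∃ σ : ℕ → Δ, σ 0 = u ∧ chainOf I P σ ∧ θ.sat I σ}

/-- A TBox: a finite list of axioms `C ⊑ D`. -/
abbrev TBox := List (Concept × Concept)

/-- `I` is a model of the TBox `T`. -/
def IsModel (I : Interp Δ) (T : TBox) : Prop :=
  ∀ ax ∈ T, (ax.1.sem I : Set Δ) ⊆ ax.2.sem I

/-- `C` is satisfiable with respect to the TBox `T`. -/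
def Satisfiable (C : Concept) (T : TBox) : Prop :=
  ∃ (Δ' : Type) (_ : Nonempty Δ') (I : Interp Δ'), IsModel I T ∧ (Concept.sem I C).Nonempty

/-- An interpretation with domain `[n]*` is an `n`-tree interpretation:
two nodes are related by some role iff the second is a child of the first. -/
def IsTree (n : ℕ) (I : Interp (List (Fin n))) : Prop :=
  ∀ u v : List (Fin n), (∃ r : ℕ, I.role r u v) ↔ ∃ γ : Fin n, v = u ++ [γ]

/-- Negation normal form: negation occurs only immediately in front of concept
names, via the connectives `⊓`, `⊔`, `∃r`, `∀r`, `∃P.⟦·⟧`, `∀P.⟦·⟧` (the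
universal connectives being the usual abbreviations). -/
inductive Concept.IsNNF : Concept → Prop
  | atom (A : ℕ) : IsNNF (.atom A)
  | negAtom (A : ℕ) : IsNNF (.neg (.atom A))
  | inter {C D : Concept} : IsNNF C → IsNNF D → IsNNF (.inter C D)
  | or {C D : Concept} : IsNNF C → IsNNF D → IsNNF (.neg (.inter (.neg C) (.neg D)))
  | ex {C : Concept} (r : ℕ) : IsNNF C → IsNNF (.ex r C)
  | all {C : Concept} (r : ℕ) : IsNNF C → IsNNF (.neg (.ex r (.neg C)))
  | exP (P : List ℕ) (θ : Constr) : IsNNF (.exP P θ)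
  | allP (P : List ℕ) (θ : Constr) : IsNNF (.neg (.exP P (.not θ)))

/-- The maximal length `|P|` over all occurrences of subconcepts `∃P.⟦θ⟧`. -/
def Concept.maxPathLen : Concept → ℕ
  | .atom _ => 0
  | .neg C => C.maxPathLen
  | .inter C D => max C.maxPathLen D.maxPathLen
  | .ex _ C => C.maxPathLen
  | .exP P _ => P.length

/-- The number of occurrences of existentially quantified subconcepts
`∃r.C` or `∃P.⟦θ⟧`. -/
def Concept.numEx : Concept → ℕ
  | .atom _ => 0
  | .neg C => C.numEx
  | .inter C D => C.numEx + D.numEx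
  | .ex _ C => C.numEx + 1
  | .exP _ _ => 1

section TreeModel
open Classical

variable {Δ : Type}

/-! ### Auxiliary facts about constraints -/

lemma Constr.sat_congr (J : Interp Δ) (θ : Constr) (σ₁ σ₂ : ℕ → Δ)
    (h : ∀ i ≤ θ.depth, σ₁ i = σ₂ i) : θ.sat J σ₁ ↔ θ.sat J σ₂ := by
  induction θ with
  | eqT i x j y =>
    simp only [Constr.sat]
    rw [h i (Nat.le_max_left i j), h j (Nat.le_max_right i j)]
  | ltT i x j y =>
    simp only [Constr.sat]
    rw [h i (Nat.le_max_left i j), h j (Nat.le_max_right i j)]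
  | eqC i x c =>
    simp only [Constr.sat]
    rw [h i le_rfl]
  | not θ ih => exact not_congr (ih h)
  | and θ₁ θ₂ ih₁ ih₂ =>
    exact and_congr (ih₁ fun i hi => h i (le_trans hi (Nat.le_max_left _ _)))
      (ih₂ fun i hi => h i (le_trans hi (Nat.le_max_right _ _)))
  | or θ₁ θ₂ ih₁ ih₂ =>
    exact or_congr (ih₁ fun i hi => h i (le_trans hi (Nat.le_max_left _ _)))
      (ih₂ fun i hi => h i (le_trans hi (Nat.le_max_right _ _)))

lemma Constr.sat_map {Δ' : Type} (J : Interp Δ) (I : Interp Δ') (f : Δ' → Δ)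
    (hreg : ∀ v x, I.reg v x = J.reg (f v) x) (θ : Constr) (σ : ℕ → Δ') :
    θ.sat I σ ↔ θ.sat J (fun i => f (σ i)) := by
  induction θ <;> simp [Constr.sat, hreg, *]

/-! ### Chains of successors -/

/-- `q` is a chain of role successors starting at `w`. -/
def IsChain (J : Interp Δ) : Δ → List (ℕ × Δ) → Prop
  | _, [] => True
  | w, p :: rest => J.role p.1 w p.2 ∧ IsChain J p.2 rest

/-- The chain description extracted from a path `P` and an assignment `σ`,
starting at position `k`. -/
def mkChain (σ : ℕ → Δ) : List ℕ → ℕ → List (ℕ × Δ)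
  | [], _ => []
  | r :: P, k => (r, σ (k + 1)) :: mkChain σ P (k + 1)

lemma mkChain_length (σ : ℕ → Δ) (P : List ℕ) (k : ℕ) :
    (mkChain σ P k).length = P.length := by
  induction P generalizing k with
  | nil => rfl
  | cons r P ih => simp [mkChain, ih]

lemma mkChain_getD (σ : ℕ → Δ) (P : List ℕ) (k i : ℕ) (hi : i < P.length) (dflt : ℕ × Δ) :
    (mkChain σ P k).getD i dflt = (P.getD i 0, σ (k + i + 1)) := by
  induction P generalizing k i with
  | nil => simp at hi
  | cons r P ih =>
    cases i with
    | zero => simp [mkChain]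
    | succ i =>
      simp only [mkChain, List.getD_cons_succ]
      rw [ih (k + 1) i (by simpa using hi)]
      congr 2
      omega

lemma mkChain_isChain (J : Interp Δ) (σ : ℕ → Δ) (P : List ℕ) (k : ℕ)
    (h : ∀ i, i < P.length → J.role (P.getD i 0) (σ (k + i)) (σ (k + i + 1))) :
    IsChain J (σ k) (mkChain σ P k) := by
  induction P generalizing k with
  | nil => trivial
  | cons r P ih =>
    refine ⟨?_, ?_⟩
    · have := h 0 (by simp)
      simpa using this
    · exact ih (k + 1) fun i hi => by
        have := h (i + 1) (by simpa using Nat.succ_lt_succ hi)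
        simpa [Nat.add_assoc, Nat.add_comm 1 i, Nat.add_left_comm] using this

/-! ### Requirement lists -/

/-- The witness requirements created at an element `w` by (occurrences of)
existential subconcepts of `E` that hold at `w`. -/
noncomputable def reqs (J : Interp Δ) (w : Δ) : Concept → List (List (ℕ × Δ))
  | .atom _ => []
  | .neg C => reqs J w C
  | .inter C D => reqs J w C ++ reqs J w D
  | .ex r C =>
      (if h : ∃ v', J.role r w v' ∧ v' ∈ Concept.sem J C then [[(r, h.choose)]] else [])
        ++ reqs J w C
  | .exP P θ =>
      if h : (∃ σ : ℕ → Δ, σ 0 = w ∧ chainOf J P σ ∧ Constr.sat J σ θ) ∧ P ≠ [] then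
        [mkChain h.1.choose P 0]
      else []

lemma reqs_length_le (J : Interp Δ) (w : Δ) (E : Concept) :
    (reqs J w E).length ≤ E.numEx := by
  induction E with
  | atom A => simp [reqs, Concept.numEx]
  | neg C ih => simpa [reqs, Concept.numEx] using ih
  | inter C D ih₁ ih₂ =>
    simp only [reqs, Concept.numEx, List.length_append]
    omega
  | ex r C ih =>
    simp only [reqs, Concept.numEx, List.length_append]
    split <;> simp <;> omega
  | exP P θ =>
    simp only [reqs, Concept.numEx]
    split <;> simp

lemma reqs_spec (J : Interp Δ) (w : Δ) (E : Concept) :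
    ∀ q ∈ reqs J w E, q ≠ [] ∧ IsChain J w q ∧ q.length ≤ max 1 E.maxPathLen := by
  induction E with
  | atom A => simp [reqs]
  | neg C ih => simpa [reqs, Concept.maxPathLen] using ih
  | inter C D ih₁ ih₂ =>
    intro q hq
    rcases List.mem_append.1 hq with h | h
    · obtain ⟨h1, h2, h3⟩ := ih₁ q h
      exact ⟨h1, h2, le_trans h3 (by simp [Concept.maxPathLen]; omega)⟩
    · obtain ⟨h1, h2, h3⟩ := ih₂ q h
      exact ⟨h1, h2, le_trans h3 (by simp [Concept.maxPathLen]; omega)⟩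
  | ex r C ih =>
    intro q hq
    rcases List.mem_append.1 hq with h | h
    · split at h
      · next hex =>
        simp only [List.mem_singleton] at h
        subst h
        refine ⟨by simp, ⟨hex.choose_spec.1, trivial⟩, by simp⟩
      · simp at h
    · obtain ⟨h1, h2, h3⟩ := ih q h
      exact ⟨h1, h2, by simpa [Concept.maxPathLen] using h3⟩
  | exP P θ =>
    intro q hq
    simp only [reqs] at hq
    split at hq
    · next hex =>
      simp only [List.mem_singleton] at hq
      subst hq
      obtain ⟨h0, hch, _⟩ := hex.1.choose_spec
      refine ⟨?_, ?_, ?_⟩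
      · cases P with
        | nil => exact absurd rfl hex.2
        | cons r P => simp [mkChain]
      · have := mkChain_isChain J hex.1.choose P 0 (fun i hi => by
          have h2 := hch i hi
          have h3 : P.getD i 0 = P.get ⟨i, hi⟩ := by
            rw [List.getD_eq_getElem _ _ hi]; rfl
          rw [h3]
          simp only [Nat.zero_add]
          exact h2)
        rwa [h0] at this
      · rw [mkChain_length]
        simp [Concept.maxPathLen]
    · simp at hq


/-! ### The unravelled tree construction -/

variable (J : Interp Δ) (LL : List Concept)

/-- All requirements of `w` arising from the list `LL` of relevant concepts. -/
noncomputable def reqsAll (w : Δ) : List (List (ℕ × Δ)) :=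
  (LL.map (reqs J w)).flatten

lemma mem_reqsAll {w : Δ} {q : List (ℕ × Δ)} {E : Concept} (hE : E ∈ LL)
    (hq : q ∈ reqs J w E) : q ∈ reqsAll J LL w := by
  simp only [reqsAll, List.mem_flatten]
  exact ⟨reqs J w E, List.mem_map_of_mem hE, hq⟩

lemma reqsAll_spec {d : ℕ} (hd1 : 1 ≤ d) (hLLd : ∀ E ∈ LL, E.maxPathLen ≤ d) (w : Δ) :
    ∀ q ∈ reqsAll J LL w, q ≠ [] ∧ IsChain J w q ∧ q.length ≤ d := by
  intro q hq
  simp only [reqsAll, List.mem_flatten, List.mem_map] at hq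
  obtain ⟨l, ⟨E, hE, rfl⟩, hql⟩ := hq
  obtain ⟨h1, h2, h3⟩ := reqs_spec J w E q hql
  refine ⟨h1, h2, le_trans h3 ?_⟩
  have := hLLd E hE
  omega

lemma reqsAll_length {e : ℕ} (hLLe : (LL.map Concept.numEx).sum ≤ e) (w : Δ) :
    (reqsAll J LL w).length ≤ e := by
  rw [reqsAll, List.length_flatten, List.map_map]
  refine le_trans (List.sum_le_sum (f := fun E => (reqs J w E).length)
    (g := Concept.numEx) ?_) hLLe
  intro E _
  exact reqs_length_le J w E

/-- The state of a node of the tree: the element of the original model it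
corresponds to, and the list of pending chain obligations. -/
structure St (Δ : Type) where
  w : Δ
  pend : List (List (ℕ × Δ))

/-- All obligations at a node: its own requirements plus inherited ones. -/
noncomputable def Qof (s : St Δ) : List (List (ℕ × Δ)) :=
  reqsAll J LL s.w ++ s.pend

/-- The head (next role and next element) of the `i`-th obligation. -/
noncomputable def hdOf (s : St Δ) (i : ℕ) : ℕ × Δ :=
  ((Qof J LL s).getD i []).headD (0, s.w)

/-- The canonical child slot for obligations whose next role is `r`. -/
noncomputable def slotFor (s : St Δ) (r : ℕ) : ℕ :=
  (Qof J LL s).findIdx (fun q => (q.headD (0, s.w)).1 == r)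

/-- The child slot assigned to the `i`-th obligation (obligations via the same
functional role are merged into the slot of the first of them). -/
noncomputable def slotOf (s : St Δ) (i : ℕ) : ℕ :=
  if (hdOf J LL s i).1 % 2 = 0 then slotFor J LL s (hdOf J LL s i).1 else i

/-- Slot `γ` is active: it is the assigned slot of some obligation. -/
def activeOf (s : St Δ) (γ : ℕ) : Prop :=
  γ < (Qof J LL s).length ∧ slotOf J LL s γ = γ

/-- The state of the `γ`-th child. -/
noncomputable def step (s : St Δ) (γ : ℕ) : St Δ :=
  if activeOf J LL s γ then
    { w := (hdOf J LL s γ).2,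
      pend := (Qof J LL s).filterMap fun q =>
        if q.headD (0, s.w) = hdOf J LL s γ ∧ 2 ≤ q.length then some q.tail else none }
  else { w := s.w, pend := [] }

/-- The role labelling the edge into the `γ`-th child (`rstar` for dummies). -/
noncomputable def edgeLabel (rstar : ℕ) (s : St Δ) (γ : ℕ) : ℕ :=
  if activeOf J LL s γ then (hdOf J LL s γ).1 else rstar

variable (w₀ : Δ) (n : ℕ)

/-- The state of a tree node. -/
noncomputable def st (v : List (Fin n)) : St Δ :=
  v.foldl (fun s γ => step J LL s γ.val) ⟨w₀, []⟩

lemma st_nil : st J LL w₀ n [] = ⟨w₀, []⟩ := rfl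

lemma st_snoc (v : List (Fin n)) (γ : Fin n) :
    st J LL w₀ n (v ++ [γ]) = step J LL (st J LL w₀ n v) γ.val := by
  simp [st, List.foldl_append]

/-- The tree interpretation. -/
noncomputable def treeI (rstar : ℕ) (hodd : rstar % 2 = 1) : Interp (List (Fin n)) where
  conc A := {v | (st J LL w₀ n v).w ∈ J.conc A}
  role r u v := ∃ γ : Fin n, v = u ++ [γ] ∧ edgeLabel J LL rstar (st J LL w₀ n u) γ.val = r
  reg v x := J.reg (st J LL w₀ n v).w x
  func := by
    rintro r hr u v' v'' ⟨γ1, rfl, hl1⟩ ⟨γ2, rfl, hl2⟩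
    have hγ : γ1.val = γ2.val := by
      rw [edgeLabel] at hl1 hl2
      split at hl1
      · split at hl2
        · next h1 h2 =>
          have e1 : slotOf J LL (st J LL w₀ n u) γ1.val = γ1.val := h1.2
          have e2 : slotOf J LL (st J LL w₀ n u) γ2.val = γ2.val := h2.2
          rw [slotOf, hl1, if_pos hr] at e1
          rw [slotOf, hl2, if_pos hr] at e2
          rw [← e1, ← e2]
        · omega
      · omega
    rw [Fin.val_injective hγ]

/-! ### The state invariant -/

def StInv (d e : ℕ) (s : St Δ) : Prop :=
  (∀ q ∈ s.pend, q ≠ [] ∧ IsChain J s.w q) ∧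
  ∀ j, 1 ≤ j → ((s.pend.filter fun q => decide (j ≤ q.length)).length ≤ e * (d - j))

variable {J LL}

lemma Qof_mem {d e : ℕ} {s : St Δ} (hd1 : 1 ≤ d) (hLLd : ∀ E ∈ LL, E.maxPathLen ≤ d)
    (hinv : StInv J d e s) : ∀ q ∈ Qof J LL s, q ≠ [] ∧ IsChain J s.w q := by
  intro q hq
  rcases List.mem_append.1 hq with h | h
  · obtain ⟨h1, h2, _⟩ := reqsAll_spec J LL hd1 hLLd s.w q h
    exact ⟨h1, h2⟩
  · exact hinv.1 q h

lemma Qof_length_le {d e : ℕ} {s : St Δ} (hd1 : 1 ≤ d)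
    (hLLe : (LL.map Concept.numEx).sum ≤ e) (hinv : StInv J d e s) :
    (Qof J LL s).length ≤ e * d := by
  rw [Qof, List.length_append]
  have h1 : (reqsAll J LL s.w).length ≤ e := reqsAll_length J LL hLLe s.w
  have h2 : s.pend.length ≤ e * (d - 1) := by
    have hfe : s.pend.filter (fun q => decide (1 ≤ q.length)) = s.pend := by
      refine List.filter_eq_self.mpr fun q hq => ?_
      have := (hinv.1 q hq).1
      simp only [decide_eq_true_eq]
      cases q with
      | nil => exact absurd rfl this
      | cons a l => simp
    have := hinv.2 1 le_rfl
    rwa [hfe] at this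
  have hd' : d - 1 + 1 = d := by omega
  calc (reqsAll J LL s.w).length + s.pend.length ≤ e + e * (d - 1) := by omega
    _ = e * (d - 1 + 1) := by ring
    _ = e * d := by rw [hd']

lemma length_filter_filterMap {α : Type} (l : List α) (f : α → Option α) (p q : α → Bool)
    (h : ∀ a b, f a = some b → p b = true → q a = true) :
    ((l.filterMap f).filter p).length ≤ (l.filter q).length := by
  induction l with
  | nil => simp
  | cons a l ih =>
    rw [List.filterMap_cons]
    cases hfa : f a with
    | none =>
      refine le_trans ih ?_
      rw [List.filter_cons]
      split <;> simp
    | some b =>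
      rw [List.filter_cons, List.filter_cons]
      by_cases hpb : p b = true
      · rw [if_pos hpb, if_pos (h a b hfa hpb)]
        simpa using ih
      · rw [if_neg hpb]
        split
        · exact le_trans ih (by simp)
        · exact ih

lemma step_inv {d e : ℕ} (hd1 : 1 ≤ d) (hLLd : ∀ E ∈ LL, E.maxPathLen ≤ d)
    (hLLe : (LL.map Concept.numEx).sum ≤ e) {s : St Δ} (γ : ℕ)
    (hinv : StInv J d e s) : StInv J d e (step J LL s γ) := by
  rw [step]
  split
  case isFalse h => exact ⟨by simp, by simp⟩
  case isTrue hact =>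
  constructor
  · rintro q' hq'
    simp only [List.mem_filterMap] at hq'
    obtain ⟨q, hqQ, hfq⟩ := hq'
    split at hfq
    case isFalse => simp at hfq
    case isTrue hcond =>
    obtain ⟨hhd, hlen⟩ := hcond
    obtain ⟨hne, hch⟩ := Qof_mem hd1 hLLd hinv q hqQ
    obtain ⟨a, rest, rfl⟩ := List.exists_cons_of_ne_nil hne
    simp only [List.headD_cons] at hhd
    simp only [List.tail_cons, Option.some.injEq] at hfq
    subst hfq
    obtain ⟨hrole, hchain⟩ := hch
    constructor
    · intro hnil
      rw [hnil] at hlen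
      simp at hlen
    · show IsChain J (hdOf J LL s γ).2 _
      rw [← hhd]
      exact hchain
  · intro j hj
    have key : ∀ (q : List (ℕ × Δ)) (b : List (ℕ × Δ)),
        (if q.headD (0, s.w) = hdOf J LL s γ ∧ 2 ≤ q.length then some q.tail else none) = some b →
        decide (j ≤ b.length) = true → decide (j + 1 ≤ q.length) = true := by
      intro q b hfb hpb
      split at hfb
      case isFalse => simp at hfb
      case isTrue hc =>
      simp only [Option.some.injEq] at hfb
      subst hfb
      simp only [decide_eq_true_eq] at hpb ⊢
      have := q.length_tail
      omega
    refine le_trans (length_filter_filterMap _ _ _ _ key) ?_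
    rw [Qof, List.filter_append, List.length_append]
    have hpend : ((s.pend.filter fun q => decide (j + 1 ≤ q.length)).length ≤ e * (d - (j + 1))) :=
      hinv.2 (j + 1) (by omega)
    by_cases hjd : j < d
    · have hreq : ((reqsAll J LL s.w).filter fun q => decide (j + 1 ≤ q.length)).length ≤ e :=
        le_trans (List.length_filter_le _ _) (reqsAll_length J LL hLLe s.w)
      have : d - j = (d - (j + 1)) + 1 := by omega
      rw [this]
      have : e * (d - (j + 1) + 1) = e * (d - (j + 1)) + e := by ring
      rw [this]
      omega
    · have hreq : ((reqsAll J LL s.w).filter fun q => decide (j + 1 ≤ q.length)) = [] := by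
        refine List.filter_eq_nil_iff.mpr fun q hq => ?_
        have := (reqsAll_spec J LL hd1 hLLd s.w q hq).2.2
        simp only [decide_eq_true_eq]
        omega
      rw [hreq]
      have h0 : d - (j + 1) = 0 := by omega
      have h0' : d - j = 0 := by omega
      rw [h0] at hpend
      rw [h0']
      simpa using hpend

lemma st_inv {d e : ℕ} (hd1 : 1 ≤ d) (hLLd : ∀ E ∈ LL, E.maxPathLen ≤ d)
    (hLLe : (LL.map Concept.numEx).sum ≤ e) (v : List (Fin n)) :
    StInv J d e (st J LL w₀ n v) := by
  suffices h : ∀ (v : List (Fin n)) (s : St Δ), StInv J d e s →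
      StInv J d e (v.foldl (fun s γ => step J LL s γ.val) s) by
    exact h v ⟨w₀, []⟩ ⟨by simp, by simp⟩
  intro v
  induction v with
  | nil => intro s hs; exact hs
  | cons γ v ih =>
    intro s hs
    exact ih _ (step_inv hd1 hLLd hLLe γ.val hs)

/-! ### Slot lemmas -/

lemma slot_lt {s : St Δ} {i : ℕ} (h : i < (Qof J LL s).length) :
    slotOf J LL s i < (Qof J LL s).length := by
  rw [slotOf]
  split
  · apply List.findIdx_lt_length_of_exists
    refine ⟨(Qof J LL s).getD i [], ?_, ?_⟩
    · rw [List.getD_eq_getElem _ _ h]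
      exact List.getElem_mem _
    · simp [hdOf]
  · exact h

lemma hd_slot {s : St Δ} {i : ℕ} (h : i < (Qof J LL s).length) :
    (hdOf J LL s (slotOf J LL s i)).1 = (hdOf J LL s i).1 := by
  by_cases he : (hdOf J LL s i).1 % 2 = 0
  · have hlt2 : (Qof J LL s).findIdx
        (fun q => (q.headD (0, s.w)).1 == (hdOf J LL s i).1) < (Qof J LL s).length := by
      have h3 := slot_lt (s := s) h
      rw [slotOf, if_pos he] at h3
      exact h3
    have hp2 := List.findIdx_getElem (w := hlt2)
    have h2 : slotOf J LL s i
        = (Qof J LL s).findIdx (fun q => (q.headD (0, s.w)).1 == (hdOf J LL s i).1) := by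
      rw [slotOf, if_pos he]; rfl
    rw [h2, hdOf, List.getD_eq_getElem _ _ hlt2]
    simpa using hp2
  · rw [slotOf, if_neg he]

lemma slot_active {s : St Δ} {i : ℕ} (h : i < (Qof J LL s).length) :
    activeOf J LL s (slotOf J LL s i) := by
  refine ⟨slot_lt h, ?_⟩
  have hr := hd_slot h
  by_cases he : (hdOf J LL s i).1 % 2 = 0
  · have h1 : slotOf J LL s (slotOf J LL s i) = slotFor J LL s (hdOf J LL s i).1 := by
      rw [slotOf, hr, if_pos he]
    have h2 : slotOf J LL s i = slotFor J LL s (hdOf J LL s i).1 := by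
      rw [slotOf, if_pos he]
    rw [h1, ← h2]
  · have h2 : slotOf J LL s i = i := by rw [slotOf, if_neg he]
    rw [h2]
    exact h2

/-! ### Realization of obligations in the tree -/

lemma realize {d e : ℕ} (hd1 : 1 ≤ d) (hLLd : ∀ E ∈ LL, E.maxPathLen ≤ d)
    (hLLe : (LL.map Concept.numEx).sum ≤ e) (hne : e * d ≤ n)
    (rstar : ℕ) (hodd : rstar % 2 = 1) :
    ∀ (q : List (ℕ × Δ)) (v : List (Fin n)), q ∈ Qof J LL (st J LL w₀ n v) →
    ∃ g : ℕ → List (Fin n), g 0 = v ∧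
      ∀ i, i < q.length →
        (treeI J LL w₀ n rstar hodd).role ((q.getD i (0, w₀)).1) (g i) (g (i + 1)) ∧
        (st J LL w₀ n (g (i + 1))).w = (q.getD i (0, w₀)).2 := by
  intro q
  induction q with
  | nil =>
    intro v _
    exact ⟨fun _ => v, rfl, by intro i hi; simp at hi⟩
  | cons a rest ih =>
    intro v hq
    set s := st J LL w₀ n v with hs
    have hinv : StInv J d e s := st_inv w₀ n hd1 hLLd hLLe v
    obtain ⟨i, hilt, hQi⟩ := List.getElem_of_mem hq
    have hhd : hdOf J LL s i = a := by
      rw [hdOf, List.getD_eq_getElem _ _ hilt, hQi]; rfl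
    have hact : activeOf J LL s (slotOf J LL s i) := slot_active hilt
    have hγlt : slotOf J LL s i < n :=
      lt_of_lt_of_le hact.1 (le_trans (Qof_length_le hd1 hLLe hinv) hne)
    set γf : Fin n := ⟨slotOf J LL s i, hγlt⟩ with hγf
    have hstep : st J LL w₀ n (v ++ [γf]) = step J LL s γf.val := by
      rw [st_snoc]
    have hhdγ : (hdOf J LL s γf.val).1 = a.1 := by
      show (hdOf J LL s (slotOf J LL s i)).1 = a.1
      rw [hd_slot hilt, hhd]
    have hactγ : activeOf J LL s γf.val := hact
    have hQγmem : (Qof J LL s).getD γf.val [] ∈ Qof J LL s := by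
      rw [List.getD_eq_getElem _ _ hactγ.1]
      exact List.getElem_mem _
    have htgt : (hdOf J LL s γf.val).2 = a.2 := by
      by_cases he2 : a.1 % 2 = 0
      · obtain ⟨hne1, hch1⟩ := Qof_mem hd1 hLLd hinv _ hQγmem
        obtain ⟨b, rest1, hb⟩ := List.exists_cons_of_ne_nil hne1
        have hhd1 : hdOf J LL s γf.val = b := by rw [hdOf, hb]; rfl
        rw [hb] at hch1
        have hrole1 : J.role b.1 s.w b.2 := hch1.1
        obtain ⟨_, hch2⟩ := Qof_mem hd1 hLLd hinv _ hq
        have hrole2 : J.role a.1 s.w a.2 := hch2.1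
        have hb1 : b.1 = a.1 := by rw [← hhd1]; exact hhdγ
        rw [hb1] at hrole1
        have := J.func a.1 he2 s.w b.2 a.2 hrole1 hrole2
        rw [hhd1]; exact this
      · have hγi : slotOf J LL s i = i := by rw [slotOf, hhd, if_neg he2]
        show (hdOf J LL s (slotOf J LL s i)).2 = a.2
        rw [hγi, hhd]
    have hlab : edgeLabel J LL rstar s γf.val = a.1 := by
      rw [edgeLabel, if_pos hactγ, hhdγ]
    have hroleI : (treeI J LL w₀ n rstar hodd).role a.1 v (v ++ [γf]) :=
      ⟨γf, rfl, hlab⟩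
    have hw' : (st J LL w₀ n (v ++ [γf])).w = a.2 := by
      rw [hstep]
      have : (step J LL s γf.val).w = (hdOf J LL s γf.val).2 := by
        rw [step, if_pos hactγ]
      rw [this, htgt]
    by_cases hrest : rest = []
    · subst hrest
      refine ⟨fun k => if k = 0 then v else v ++ [γf], rfl, ?_⟩
      intro i2 hi2
      have hi0 : i2 = 0 := by simpa using hi2
      subst hi0
      simpa using ⟨hroleI, hw'⟩
    · have ha : a = hdOf J LL s γf.val := by
        have := Prod.ext hhdγ htgt
        exact this.symm
      have hrestmem : rest ∈ Qof J LL (st J LL w₀ n (v ++ [γf])) := by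
        rw [hstep, step, if_pos hactγ]
        refine List.mem_append_right _ ?_
        refine List.mem_filterMap.mpr ⟨a :: rest, hq, ?_⟩
        have hlen2 : 2 ≤ (a :: rest).length := by
          have : 1 ≤ rest.length := by
            cases rest with
            | nil => exact absurd rfl hrest
            | cons _ _ => simp
          simp only [List.length_cons]
          omega
        rw [if_pos ⟨by rw [List.headD_cons, ha], hlen2⟩, List.tail_cons]
      obtain ⟨g', hg0, hg⟩ := ih (v ++ [γf]) hrestmem
      refine ⟨fun k => match k with | 0 => v | k + 1 => g' k, rfl, ?_⟩
      intro i2 hi2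
      cases i2 with
      | zero =>
        constructor
        · show (treeI J LL w₀ n rstar hodd).role (((a :: rest).getD 0 (0, w₀)).1) v (g' 0)
          rw [hg0, List.getD_cons_zero]
          exact hroleI
        · show (st J LL w₀ n (g' 0)).w = ((a :: rest).getD 0 (0, w₀)).2
          rw [hg0, List.getD_cons_zero]
          exact hw'
      | succ i2 =>
        have := hg i2 (by simpa using hi2)
        simpa using this

/-! ### Soundness of tree edges -/

lemma edge_sound {d e : ℕ} (hd1 : 1 ≤ d) (hLLd : ∀ E ∈ LL, E.maxPathLen ≤ d)
    (hLLe : (LL.map Concept.numEx).sum ≤ e) {v : List (Fin n)} {γ : Fin n} {r rstar : ℕ}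
    (hr : r ≠ rstar) (hl : edgeLabel J LL rstar (st J LL w₀ n v) γ.val = r) :
    J.role r (st J LL w₀ n v).w (st J LL w₀ n (v ++ [γ])).w := by
  set s := st J LL w₀ n v with hs
  have hinv : StInv J d e s := st_inv w₀ n hd1 hLLd hLLe v
  rw [edgeLabel] at hl
  split at hl
  case isFalse => exact absurd hl.symm hr
  case isTrue hact =>
    have hQγmem : (Qof J LL s).getD γ.val [] ∈ Qof J LL s := by
      rw [List.getD_eq_getElem _ _ hact.1]
      exact List.getElem_mem _
    obtain ⟨hne1, hch1⟩ := Qof_mem hd1 hLLd hinv _ hQγmem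
    obtain ⟨b, rest1, hb⟩ := List.exists_cons_of_ne_nil hne1
    have hhd1 : hdOf J LL s γ.val = b := by rw [hdOf, hb]; rfl
    rw [hb] at hch1
    have hw' : (st J LL w₀ n (v ++ [γ])).w = b.2 := by
      rw [st_snoc]
      have h2 : (step J LL s γ.val).w = (hdOf J LL s γ.val).2 := by
        rw [step, if_pos hact]
      rw [h2, hhd1]
    rw [hw', ← hl, hhd1]
    exact hch1.1

/-! ### Role names occurring in a concept -/

def Concept.rolesL : Concept → List ℕ
  | .atom _ => []
  | .neg C => C.rolesL
  | .inter C D => C.rolesL ++ D.rolesL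
  | .ex r C => r :: C.rolesL
  | .exP P _ => P

lemma reqs_neg (J : Interp Δ) (w : Δ) (C : Concept) :
    reqs J w (Concept.neg C) = reqs J w C := by rw [reqs]

lemma reqs_sub_ex (J : Interp Δ) (w : Δ) (r : ℕ) (C : Concept) :
    ∀ q ∈ reqs J w C, q ∈ reqs J w (Concept.ex r C) := by
  intro q hq
  rw [reqs]
  exact List.mem_append_right _ hq

lemma le_foldr_max {l : List ℕ} {a : ℕ} (h : a ∈ l) : a ≤ l.foldr max 0 := by
  induction l with
  | nil => simp at h
  | cons b l ih =>
    rcases List.mem_cons.1 h with rfl | h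
    · exact le_max_left _ _
    · exact le_trans (ih h) (le_max_right _ _)

/-! ### The main semantic transfer lemma -/

lemma main_lemma {d e : ℕ} (hd1 : 1 ≤ d) (hLLd : ∀ E ∈ LL, E.maxPathLen ≤ d)
    (hLLe : (LL.map Concept.numEx).sum ≤ e) (hne : e * d ≤ n)
    (rstar : ℕ) (hodd : rstar % 2 = 1)
    (E : Concept) (hnnf : E.IsNNF) :
    E.wf → (∀ r' ∈ E.rolesL, r' ≠ rstar) →
    (∀ (w : Δ) (q : List (ℕ × Δ)), q ∈ reqs J w E → q ∈ reqsAll J LL w) →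
    ∀ v : List (Fin n), (st J LL w₀ n v).w ∈ E.sem J →
      v ∈ E.sem (treeI J LL w₀ n rstar hodd) := by
  induction hnnf with
  | atom A =>
    intro _ _ _ v hv
    exact hv
  | negAtom A =>
    intro _ _ _ v hv
    exact hv
  | @inter C D hC hD ihC ihD =>
    intro hwf hrole hsub v hv
    have hwf' : C.wf ∧ D.wf := hwf
    obtain ⟨hv1, hv2⟩ := hv
    exact ⟨ihC hwf'.1 (fun r hr => hrole r (List.mem_append_left _ hr))
        (fun w q hq => hsub w q (List.mem_append_left _ hq)) v hv1,
      ihD hwf'.2 (fun r hr => hrole r (List.mem_append_right _ hr))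
        (fun w q hq => hsub w q (List.mem_append_right _ hq)) v hv2⟩
  | @or C D hC hD ihC ihD =>
    intro hwf hrole hsub v hv
    have hwf' : C.wf ∧ D.wf := hwf
    have hrole' : ∀ r' ∈ C.rolesL ++ D.rolesL, r' ≠ rstar := hrole
    have hsub' : ∀ (w : Δ) (q : List (ℕ × Δ)),
        q ∈ reqs J w C ++ reqs J w D → q ∈ reqsAll J LL w := hsub
    have hcd : (st J LL w₀ n v).w ∈ C.sem J ∨ (st J LL w₀ n v).w ∈ D.sem J := by
      by_contra hcon
      push_neg at hcon
      exact hv ⟨hcon.1, hcon.2⟩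
    show ¬ (v ∈ (C.sem (treeI J LL w₀ n rstar hodd))ᶜ ∧
        v ∈ (D.sem (treeI J LL w₀ n rstar hodd))ᶜ)
    rintro ⟨h1, h2⟩
    rcases hcd with h | h
    · exact h1 (ihC hwf'.1 (fun r hr => hrole' r (List.mem_append_left _ hr))
        (fun w q hq => hsub' w q (List.mem_append_left _ hq)) v h)
    · exact h2 (ihD hwf'.2 (fun r hr => hrole' r (List.mem_append_right _ hr))
        (fun w q hq => hsub' w q (List.mem_append_right _ hq)) v h)
  | @ex C r hC ihC =>
    intro hwf hrole hsub v hv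
    have hx : ∃ v', J.role r (st J LL w₀ n v).w v' ∧ v' ∈ Concept.sem J C := hv
    have hmem : [(r, hx.choose)] ∈ reqs J (st J LL w₀ n v).w (.ex r C) := by
      rw [reqs, dif_pos hx]
      exact List.mem_append_left _ (List.mem_singleton.mpr rfl)
    have hQ : [(r, hx.choose)] ∈ Qof J LL (st J LL w₀ n v) :=
      List.mem_append_left _ (hsub _ _ hmem)
    obtain ⟨g, hg0, hg⟩ := realize w₀ n hd1 hLLd hLLe hne rstar hodd _ v hQ
    obtain ⟨hrole1, hw1⟩ := hg 0 (by simp)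
    simp only [List.getD_cons_zero] at hrole1 hw1
    refine ⟨g 1, ?_, ?_⟩
    · rw [← hg0]
      exact hrole1
    · apply ihC hwf (fun r' h => hrole r' (List.mem_cons_of_mem _ h))
        (fun w q hq => hsub w q (by rw [reqs]; exact List.mem_append_right _ hq)) (g 1)
      rw [hw1]
      exact hx.choose_spec.2
  | @all C r hC ihC =>
    intro hwf hrole hsub v hv
    rintro ⟨v', hrr, hv'⟩
    obtain ⟨γ, rfl, hlab⟩ := hrr
    have hr : r ≠ rstar := hrole r List.mem_cons_self
    have hJ : J.role r (st J LL w₀ n v).w (st J LL w₀ n (v ++ [γ])).w :=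
      edge_sound w₀ n hd1 hLLd hLLe hr hlab
    have hCJ : (st J LL w₀ n (v ++ [γ])).w ∈ C.sem J := by
      by_contra hcon
      exact hv ⟨_, hJ, hcon⟩
    exact hv' (ihC hwf (fun r' h => hrole r' (List.mem_cons_of_mem _ h))
      (fun w q hq => hsub w q (by
        rw [reqs_neg]
        exact reqs_sub_ex J w r _ q (by rw [reqs_neg]; exact hq))) (v ++ [γ]) hCJ)
  | exP P θ =>
    intro hwf hrole hsub v hv
    by_cases hP : P = []
    · subst hP
      obtain ⟨σ, hσ0, hch, hsat⟩ := hv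
      refine ⟨fun _ => v, rfl, fun i hi => by simp at hi, ?_⟩
      rw [Constr.sat_map J _ (fun u => (st J LL w₀ n u).w) (fun _ _ => rfl)]
      refine (Constr.sat_congr J θ _ σ ?_).mpr hsat
      intro i hi
      have hdep : θ.depth ≤ ([] : List ℕ).length := hwf
      have : i = 0 := by simp at hdep; omega
      subst this
      exact hσ0.symm
    · have hx : (∃ σ : ℕ → Δ, σ 0 = (st J LL w₀ n v).w ∧ chainOf J P σ ∧ Constr.sat J σ θ)
          ∧ P ≠ [] := ⟨hv, hP⟩
      obtain ⟨hσ0, hch, hsat⟩ := hx.1.choose_spec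
      have hmem : mkChain hx.1.choose P 0 ∈ reqs J (st J LL w₀ n v).w (.exP P θ) := by
        rw [reqs, dif_pos hx]
        exact List.mem_singleton.mpr rfl
      have hQ : mkChain hx.1.choose P 0 ∈ Qof J LL (st J LL w₀ n v) :=
        List.mem_append_left _ (hsub _ _ hmem)
      obtain ⟨g, hg0, hg⟩ := realize w₀ n hd1 hLLd hLLe hne rstar hodd _ v hQ
      refine ⟨g, hg0, ?_, ?_⟩
      · intro i hi
        have h1 := (hg i (by rw [mkChain_length]; exact hi)).1
        rw [mkChain_getD _ _ _ _ hi] at h1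
        have h3 : P.getD i 0 = P.get ⟨i, hi⟩ := by
          rw [List.getD_eq_getElem _ _ hi]; rfl
        rw [← h3]
        exact h1
      · rw [Constr.sat_map J _ (fun u => (st J LL w₀ n u).w) (fun _ _ => rfl)]
        refine (Constr.sat_congr J θ _ hx.1.choose ?_).mpr hsat
        intro i hid
        have hdep : θ.depth ≤ P.length := hwf
        have hiP : i ≤ P.length := le_trans hid hdep
        cases i with
        | zero =>
          rw [hg0]
          exact hσ0.symm
        | succ i =>
          have hilt : i < P.length := by omega
          have h2 := (hg i (by rw [mkChain_length]; exact hilt)).2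
          rw [mkChain_getD _ _ _ _ hilt] at h2
          rw [h2]
          norm_num
  | allP P θ =>
    intro hwf hrole hsub v hv
    rintro ⟨σ', hσ0, hch, hns⟩
    apply hv
    refine ⟨fun i => (st J LL w₀ n (σ' i)).w,
      by show (st J LL w₀ n (σ' 0)).w = (st J LL w₀ n v).w; rw [hσ0], ?_, ?_⟩
    · intro i hi
      obtain ⟨γ, heq, hlab⟩ := hch i hi
      have hr : P.get ⟨i, hi⟩ ≠ rstar :=
        hrole _ (by show P.get ⟨i, hi⟩ ∈ P; exact List.get_mem P ⟨i, hi⟩)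
      have h5 := edge_sound w₀ n hd1 hLLd hLLe hr hlab
      show J.role (P.get ⟨i, hi⟩) (st J LL w₀ n (σ' i)).w (st J LL w₀ n (σ' (i + 1))).w
      rw [heq]
      exact h5
    · show ¬ Constr.sat J (fun i => (st J LL w₀ n (σ' i)).w) θ
      intro hsatJ
      exact hns ((Constr.sat_map J _ (fun u => (st J LL w₀ n u).w) (fun _ _ => rfl) θ σ').mpr hsatJ)

end TreeModel

/-- tree model property: if `C` and the concepts `¬C' ⊔ D'` for the
axioms `C' ⊑ D'` of `T` are in negation normal form, `d` is the maximal path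
length and `e` the number of existential subconcepts occurring in them, `d, e ≥ 1`
and `n = d·e`, then satisfiability of `C` w.r.t. `T` yields an `n`-tree model. -/
theorem tree_model_property (C : Concept) (T : TBox)
    (hwfC : C.wf) (hwfT : ∀ ax ∈ T, ax.1.wf ∧ ax.2.wf)
    (hnnfC : C.IsNNF)
    (hnnfT : ∀ ax ∈ T, (Concept.or' (.neg ax.1) ax.2).IsNNF)
    (d e n : ℕ)
    (hd : d = max C.maxPathLen
      ((T.map fun ax => (Concept.or' (.neg ax.1) ax.2).maxPathLen).foldr max 0))
    (he : e = C.numEx + (T.map fun ax => (Concept.or' (.neg ax.1) ax.2).numEx).sum)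
    (hd1 : 1 ≤ d) (he1 : 1 ≤ e) (hn : n = d * e)
    (hsat : Satisfiable C T) :
    ∃ I : Interp (List (Fin n)), IsTree n I ∧ IsModel I T ∧ (Concept.sem I C).Nonempty := by
  classical
  obtain ⟨Δ', hne', J, hmodel, w₀, hw₀⟩ := hsat
  set LL : List Concept := C :: T.map (fun ax => Concept.or' (.neg ax.1) ax.2) with hLLdef
  set rstar : ℕ := 2 * ((LL.map Concept.rolesL).flatten.foldr max 0) + 1 with hrs
  have hodd : rstar % 2 = 1 := by omega
  have hLLroles : ∀ E ∈ LL, ∀ r' ∈ E.rolesL, r' ≠ rstar := by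
    intro E hE r' hr' hcon
    have h1 : r' ≤ (LL.map Concept.rolesL).flatten.foldr max 0 :=
      le_foldr_max (List.mem_flatten.mpr ⟨E.rolesL, List.mem_map_of_mem hE, hr'⟩)
    omega
  have hLLd : ∀ E ∈ LL, E.maxPathLen ≤ d := by
    intro E hE
    rcases List.mem_cons.1 hE with rfl | hE
    · rw [hd]; exact le_max_left _ _
    · obtain ⟨ax, hax, rfl⟩ := List.mem_map.1 hE
      rw [hd]
      exact le_trans (le_foldr_max (List.mem_map_of_mem
        (f := fun ax : Concept × Concept => (Concept.or' (Concept.neg ax.1) ax.2).maxPathLen) hax)) (le_max_right _ _)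
  have hLLe : (LL.map Concept.numEx).sum ≤ e := by
    rw [he, hLLdef]
    simp [List.map_map, Function.comp_def]
  have hne2 : e * d ≤ n := by rw [hn, Nat.mul_comm]
  have hEJall : ∀ ax ∈ T, ∀ w : Δ', w ∈ (Concept.or' (.neg ax.1) ax.2).sem J := by
    intro ax hax w hcon
    obtain ⟨h1, h2⟩ := hcon
    apply h2
    apply hmodel ax hax
    by_contra h3
    exact h1 h3
  refine ⟨treeI J LL w₀ n rstar hodd, ?_, ?_, ⟨[], ?_⟩⟩
  · intro u v
    constructor
    · rintro ⟨r, γ, rfl, _⟩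
      exact ⟨γ, rfl⟩
    · rintro ⟨γ, rfl⟩
      exact ⟨edgeLabel J LL rstar (st J LL w₀ n u) γ.val, γ, rfl, rfl⟩
  · intro ax hax v hv1
    have hnnfE := hnnfT ax hax
    have hwfE : (Concept.or' (.neg ax.1) ax.2).wf := by
      have h4 := hwfT ax hax
      exact ⟨h4.1, h4.2⟩
    have hEmem : (Concept.or' (.neg ax.1) ax.2) ∈ LL :=
      List.mem_cons_of_mem _ (List.mem_map_of_mem hax)
    have hv2 := main_lemma w₀ n hd1 hLLd hLLe hne2 rstar hodd _ hnnfE hwfE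
      (hLLroles _ hEmem) (fun w q hq => mem_reqsAll J LL hEmem hq) v (hEJall ax hax _)
    by_contra h3
    exact hv2 ⟨fun h4 => h4 hv1, h3⟩
  · exact main_lemma w₀ n hd1 hLLd hLLe hne2 rstar hodd C hnnfC hwfC
      (hLLroles C List.mem_cons_self)
      (fun w q hq => mem_reqsAll J LL List.mem_cons_self hq) [] hw₀

end ALCFPZ
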